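/- Let p be a prime and let f(x,y) = a20*x^2 + a11*x*y + a02*y^2 + a10*x + a01*y + a00 have integer coefficients with p not dividing a10 or p not dividing a01. Let k ≥ 1 and let b, c be integers with p ∣ b, p ∣ c, and p^k ∣ f(b,c). Then the number of pairs (i,j) with 0 ≤ i ≤ p−1 and 0 ≤ j ≤ p−1 such that p^(k+1) divides f(b + p^k·i, c + p^k·j) is exactly p. -/

import Mathlib

private lemma count_aux (p : ℕ) [hp : Fact p.Prime] (A B M : ℤ) (hB : ¬ (p : ℤ) ∣ B) :
    ((Finset.range p ×ˢ Finset.range p).filter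
      (fun ij : ℕ × ℕ => (p : ℤ) ∣ M + A * ij.1 + B * ij.2)).card = p := by
  have hBz : (B : ZMod p) ≠ 0 := by rwa [Ne, ZMod.intCast_zmod_eq_zero_iff_dvd]
  have key : ∀ (i : ℕ) (z : ZMod p),
      ((M : ZMod p) + A * i + B * z = 0) ↔ z = -((M : ZMod p) + A * i) * (B : ZMod p)⁻¹ := by
    intro i z
    constructor
    · intro h
      have : (B : ZMod p) * z = -((M : ZMod p) + A * i) := by linear_combination h
      field_simp at this ⊢
      linear_combination this
    · rintro rfl
      field_simp
      ring
  conv_rhs => rw [← Finset.card_range p]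
  apply Finset.card_bij' (fun ij _ => ij.1)
    (fun (i : ℕ) _ => ((i, (-(((M : ZMod p) + (A : ZMod p) * i)) * (B : ZMod p)⁻¹).val) : ℕ × ℕ))
  · intro ij hij
    simp only [Finset.mem_filter, Finset.mem_product, Finset.mem_range] at hij
    exact Finset.mem_range.mpr hij.1.1
  · intro i hi
    simp only [Finset.mem_filter, Finset.mem_product, Finset.mem_range] at *
    refine ⟨⟨hi, ZMod.val_lt _⟩, ?_⟩
    rw [← ZMod.intCast_zmod_eq_zero_iff_dvd]
    push_cast
    rw [ZMod.natCast_val, ZMod.cast_id]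
    rw [key]
  · intro ij hij
    simp only [Finset.mem_filter, Finset.mem_product, Finset.mem_range] at hij
    obtain ⟨⟨hi, hj⟩, hdvd⟩ := hij
    rw [← ZMod.intCast_zmod_eq_zero_iff_dvd] at hdvd
    push_cast at hdvd
    rw [key] at hdvd
    have : ((-(((M : ZMod p) + A * ij.1)) * (B : ZMod p)⁻¹).val) = ij.2 := by
      rw [← hdvd, ZMod.val_natCast_of_lt hj]
    rw [this]
  · intro i hi
    rfl

private lemma count_aux' (p : ℕ) [hp : Fact p.Prime] (A B M : ℤ) (hA : ¬ (p : ℤ) ∣ A) :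
    ((Finset.range p ×ˢ Finset.range p).filter
      (fun ij : ℕ × ℕ => (p : ℤ) ∣ M + A * ij.1 + B * ij.2)).card = p := by
  have hAz : (A : ZMod p) ≠ 0 := by rwa [Ne, ZMod.intCast_zmod_eq_zero_iff_dvd]
  have key : ∀ (j : ℕ) (z : ZMod p),
      ((M : ZMod p) + A * z + B * j = 0) ↔ z = -((M : ZMod p) + B * j) * (A : ZMod p)⁻¹ := by
    intro j z
    constructor
    · intro h
      have : (A : ZMod p) * z = -((M : ZMod p) + B * j) := by linear_combination h
      field_simp at this ⊢
      linear_combination this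
    · rintro rfl
      field_simp
      ring
  conv_rhs => rw [← Finset.card_range p]
  apply Finset.card_bij' (fun ij _ => ij.2)
    (fun (j : ℕ) _ => (((-(((M : ZMod p) + (B : ZMod p) * j)) * (A : ZMod p)⁻¹).val, j) : ℕ × ℕ))
  · intro ij hij
    simp only [Finset.mem_filter, Finset.mem_product, Finset.mem_range] at hij
    exact Finset.mem_range.mpr hij.1.2
  · intro j hj
    simp only [Finset.mem_filter, Finset.mem_product, Finset.mem_range] at *
    refine ⟨⟨ZMod.val_lt _, hj⟩, ?_⟩
    rw [← ZMod.intCast_zmod_eq_zero_iff_dvd]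
    push_cast
    rw [ZMod.natCast_val, ZMod.cast_id]
    rw [key]
  · intro ij hij
    simp only [Finset.mem_filter, Finset.mem_product, Finset.mem_range] at hij
    obtain ⟨⟨hi, hj⟩, hdvd⟩ := hij
    rw [← ZMod.intCast_zmod_eq_zero_iff_dvd] at hdvd
    push_cast at hdvd
    rw [key] at hdvd
    have : ((-(((M : ZMod p) + B * ij.2)) * (A : ZMod p)⁻¹).val) = ij.1 := by
      rw [← hdvd, ZMod.val_natCast_of_lt hi]
    rw [this]
  · intro j hj
    rfl

/-- Case 1 of the proof of Theorem 3.1: when `(b, c) ≡ (0, 0) (mod p)` and at least one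
of the linear coefficients `a10`, `a01` is a unit mod `p`, exactly `p` of the `p^2`
children of the vertex `(b, c)` in the `p`-adic valuation tree are labelled `*`. -/
theorem degree_two_case_one (p : ℕ) (hp : p.Prime)
    (a20 a11 a02 a10 a01 a00 : ℤ)
    (hlin : ¬ (p : ℤ) ∣ a10 ∨ ¬ (p : ℤ) ∣ a01)
    (k : ℕ) (hk : 1 ≤ k) (b c : ℤ)
    (hb : (p : ℤ) ∣ b) (hc : (p : ℤ) ∣ c)
    (f : ℤ → ℤ → ℤ)
    (hf : ∀ x y : ℤ, f x y =
      a20 * x ^ 2 + a11 * x * y + a02 * y ^ 2 + a10 * x + a01 * y + a00)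
    (hdiv : (p : ℤ) ^ k ∣ f b c) :
    ((Finset.range p ×ˢ Finset.range p).filter
        (fun ij : ℕ × ℕ =>
          (p : ℤ) ^ (k + 1) ∣ f (b + (p : ℤ) ^ k * ij.1) (c + (p : ℤ) ^ k * ij.2))).card = p := by
  haveI : Fact p.Prime := ⟨hp⟩
  obtain ⟨m, hm⟩ := hdiv
  obtain ⟨b', rfl⟩ := hb
  obtain ⟨c', rfl⟩ := hc
  obtain ⟨n, rfl⟩ : ∃ n, k = n + 1 := ⟨k - 1, (Nat.succ_pred_eq_of_pos hk).symm⟩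
  have hp0 : (p : ℤ) ≠ 0 := Int.natCast_ne_zero.mpr hp.ne_zero
  have hpk : (p : ℤ) ^ (n + 1) ≠ 0 := pow_ne_zero _ hp0
  have hiff : ∀ ij : ℕ × ℕ,
      ((p : ℤ) ^ (n + 1 + 1) ∣
        f ((p : ℤ) * b' + (p : ℤ) ^ (n + 1) * ij.1) ((p : ℤ) * c' + (p : ℤ) ^ (n + 1) * ij.2))
      ↔ (p : ℤ) ∣ m + a10 * ij.1 + a01 * ij.2 := by
    intro ij
    set i : ℤ := (ij.1 : ℤ)
    set j : ℤ := (ij.2 : ℤ)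
    have expand : f ((p : ℤ) * b' + (p : ℤ) ^ (n + 1) * i) ((p : ℤ) * c' + (p : ℤ) ^ (n + 1) * j)
        = (p : ℤ) ^ (n + 1) * (m + a10 * i + a01 * j)
          + (p : ℤ) ^ (n + 1 + 1) *
            (a20 * (2 * b' * i + (p : ℤ) ^ n * i ^ 2)
              + a11 * (b' * j + c' * i + (p : ℤ) ^ n * (i * j))
              + a02 * (2 * c' * j + (p : ℤ) ^ n * j ^ 2)) := by
      have hfb := hf ((p : ℤ) * b') ((p : ℤ) * c')
      rw [hf]
      rw [hfb] at hm
      linear_combination hm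
    rw [expand]
    rw [dvd_add_left ⟨_, rfl⟩, pow_succ, mul_dvd_mul_iff_left hpk]
  rw [Finset.filter_congr (fun ij _ => hiff ij)]
  rcases hlin with h | h
  · exact count_aux' p a10 a01 m h
  · exact count_aux p a10 a01 m h
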